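/- Theorem 4.1(1), abscissa of convergence: the Dirichlet series Σ_{n≥1} O_λ(n) n^{−s} has abscissa of convergence exactly N; that is, it converges for every complex s with Re(s) > N and diverges for every s with Re(s) < N. -/

import Mathlib

open Finset

/-- generic index-count. -/
noncomputable def idxCount (G : Type*) [AddGroup G] (n : ℕ) : ℕ :=
  Nat.card {H : AddSubgroup G // H.index = n}

/-- transfer along an AddEquiv. -/
def idxEquiv {G G' : Type*} [AddGroup G] [AddGroup G'] (e : G ≃+ G') (n : ℕ) :
    {H : AddSubgroup G' // H.index = n} ≃ {H : AddSubgroup G // H.index = n} where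
  toFun H := ⟨H.1.comap e.toAddMonoidHom,
    by rw [AddSubgroup.index_comap_of_surjective _ e.surjective]; exact H.2⟩
  invFun H := ⟨H.1.comap e.symm.toAddMonoidHom,
    by rw [AddSubgroup.index_comap_of_surjective _ e.symm.surjective]; exact H.2⟩
  left_inv H := by
    ext x
    simp [AddSubgroup.mem_comap]
  right_inv H := by
    ext x
    simp [AddSubgroup.mem_comap]

lemma idxCount_congr {G G' : Type*} [AddGroup G] [AddGroup G'] (e : G ≃+ G') (n : ℕ) :
    idxCount G' n = idxCount G n := Nat.card_congr (idxEquiv e n)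

lemma index_subsingleton {G : Type*} [AddGroup G] [Subsingleton G] (H : AddSubgroup G) :
    H.index = 1 := by
  have : Subsingleton (G ⧸ H) := Quotient.instSubsingletonQuotient _
  exact Nat.card_eq_one_iff_unique.mpr ⟨⟨fun a b => Subsingleton.elim a b⟩, ⟨QuotientAddGroup.mk 0⟩⟩

lemma idxCount_subsingleton {G : Type*} [AddGroup G] [Subsingleton G] (n : ℕ) :
    idxCount G n = if n = 1 then 1 else 0 := by
  split_ifs with h
  · subst h
    exact Nat.card_eq_one_iff_unique.mpr
      ⟨⟨fun a b => Subtype.ext (Subsingleton.elim _ _)⟩, ⟨⟨⊤, index_subsingleton _⟩⟩⟩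
  · rw [idxCount, Nat.card_eq_zero]
    left
    exact ⟨fun H => h (H.2 ▸ (index_subsingleton H.1).symm ▸ rfl)⟩

lemma finite_idx_subsingleton {G : Type*} [AddGroup G] [Subsingleton G] (n : ℕ) :
    Finite {H : AddSubgroup G // H.index = n} := by
  infer_instance
section Step

variable {G : Type*} [AddCommGroup G]

namespace ZStep

/-- The subgroup `{g | (g,0) ∈ H}`. -/
def Kof (H : AddSubgroup (G × ℤ)) : AddSubgroup G := H.comap (AddMonoidHom.inl G ℤ)

/-- The image of `H` under the second projection. -/
def Sof (H : AddSubgroup (G × ℤ)) : AddSubgroup ℤ := H.map (AddMonoidHom.snd G ℤ)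

lemma mem_Kof {H : AddSubgroup (G × ℤ)} {g : G} : g ∈ Kof H ↔ (g, (0:ℤ)) ∈ H := Iff.rfl

open scoped Classical in
noncomputable def vof (H : AddSubgroup (G × ℤ)) : G :=
  if h : ∃ g : G, (g, ((Sof H).index : ℤ)) ∈ H then h.choose else 0

/-- Reconstruction of a subgroup of `G × ℤ` from the data `(K, d, v̄)`. -/
def Hrec (K : AddSubgroup G) (d : ℕ) (vb : G ⧸ K) : AddSubgroup (G × ℤ) where
  carrier := {p | ∃ m : ℤ, p.2 = m * d ∧ QuotientAddGroup.mk p.1 = m • vb}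
  zero_mem' := ⟨0, by simp, by simp⟩
  add_mem' := by
    rintro a b ⟨ma, ha2, ha1⟩ ⟨mb, hb2, hb1⟩
    refine ⟨ma + mb, ?_, ?_⟩
    · simp [ha2, hb2, add_mul]
    · show QuotientAddGroup.mk (a.1 + b.1) = _
      rw [QuotientAddGroup.mk_add, ha1, hb1, add_zsmul]
  neg_mem' := by
    rintro a ⟨ma, ha2, ha1⟩
    refine ⟨-ma, ?_, ?_⟩
    · simp [ha2, neg_mul]
    · show QuotientAddGroup.mk (-a.1) = _
      rw [QuotientAddGroup.mk_neg, ha1, neg_zsmul]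

variable (H : AddSubgroup (G × ℤ))

/-- The map `G ⧸ K → (G × ℤ) ⧸ H`. -/
def ψ : G ⧸ Kof H →+ (G × ℤ) ⧸ H :=
  QuotientAddGroup.map _ _ (AddMonoidHom.inl G ℤ)
    (show Kof H ≤ H.comap (AddMonoidHom.inl G ℤ) from le_rfl)

/-- The map `(G × ℤ) ⧸ H → ℤ ⧸ S`. -/
def φ : ((G × ℤ) ⧸ H) →+ ℤ ⧸ Sof H :=
  QuotientAddGroup.map _ _ (AddMonoidHom.snd G ℤ)
    (fun x hx => AddSubgroup.mem_comap.mpr (AddSubgroup.mem_map_of_mem _ hx))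

lemma ψ_inj : Function.Injective (ψ H) := by
  rw [injective_iff_map_eq_zero]
  intro a ha
  obtain ⟨g, rfl⟩ := QuotientAddGroup.mk_surjective a
  rw [ψ, QuotientAddGroup.map_mk, QuotientAddGroup.eq_zero_iff] at ha
  rw [QuotientAddGroup.eq_zero_iff]
  exact ha

lemma φ_surj : Function.Surjective (φ H) := by
  intro q
  obtain ⟨t, rfl⟩ := QuotientAddGroup.mk_surjective q
  exact ⟨QuotientAddGroup.mk (0, t), rfl⟩

lemma ker_φ : (φ H).ker = (ψ H).range := by
  ext q
  obtain ⟨⟨g, t⟩, rfl⟩ := QuotientAddGroup.mk_surjective q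
  constructor
  · intro hq
    rw [AddMonoidHom.mem_ker, φ, QuotientAddGroup.map_mk, QuotientAddGroup.eq_zero_iff] at hq
    obtain ⟨⟨g', t'⟩, hg't', ht'⟩ := hq
    refine ⟨QuotientAddGroup.mk (g - g'), ?_⟩
    rw [ψ, QuotientAddGroup.map_mk]
    rw [QuotientAddGroup.eq]
    have ht2 : t' = t := ht'
    have key : -(AddMonoidHom.inl G ℤ) (g - g') + (g, t) = (g', t') := by
      apply Prod.ext
      · simp [neg_sub]
      · simp [ht2]
    rw [key]
    exact hg't'
  · rintro ⟨a, ha⟩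
    obtain ⟨g', rfl⟩ := QuotientAddGroup.mk_surjective a
    rw [AddMonoidHom.mem_ker, ← ha, ψ, QuotientAddGroup.map_mk, φ, QuotientAddGroup.map_mk,
      QuotientAddGroup.eq_zero_iff]
    exact AddSubgroup.zero_mem _

variable {H} {n : ℕ} (hH : H.index = n) (hn : n ≠ 0)
include hH hn

lemma finite_quot : Finite ((G × ℤ) ⧸ H) :=
  Nat.finite_of_card_ne_zero (by rw [← AddSubgroup.index_eq_card, hH]; exact hn)

lemma finite_quot_K : Finite (G ⧸ Kof H) := by
  have := finite_quot hH hn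
  exact Finite.of_injective _ (ψ_inj H)

/-- product formula `n = d * e`. -/
lemma prod_formula : n = (Sof H).index * (Kof H).index := by
  have h1 := finite_quot hH hn
  have h2 := finite_quot_K hH hn
  have hcard : Nat.card ((G × ℤ) ⧸ H) = n := by rw [← AddSubgroup.index_eq_card, hH]
  have lag : Nat.card ((G × ℤ) ⧸ H)
      = Nat.card (((G × ℤ) ⧸ H) ⧸ (φ H).ker) * Nat.card ((φ H).ker) :=
    AddSubgroup.card_eq_card_quotient_mul_card_addSubgroup _
  have c1 : Nat.card (((G × ℤ) ⧸ H) ⧸ (φ H).ker) = (Sof H).index := by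
    rw [Nat.card_congr (QuotientAddGroup.quotientKerEquivOfSurjective _ (φ_surj H)).toEquiv,
      AddSubgroup.index_eq_card]
  have c2 : Nat.card ((φ H).ker) = (Kof H).index := by
    rw [ker_φ, Nat.card_congr (AddMonoidHom.ofInjective (ψ_inj H)).toEquiv.symm,
      AddSubgroup.index_eq_card]
  rw [← hcard, lag, c1, c2]

lemma index_Sof_ne_zero : (Sof H).index ≠ 0 := by
  intro h
  rw [prod_formula hH hn, h, zero_mul] at hn
  exact hn rfl

lemma index_Kof_ne_zero : (Kof H).index ≠ 0 := by
  intro h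
  rw [prod_formula hH hn, h, mul_zero] at hn
  exact hn rfl

omit hH hn in
lemma natCast_index_mem_Sof : (((Sof H).index : ℤ)) ∈ Sof H := by
  have := AddSubgroup.nsmul_index_mem (Sof H) (1 : ℤ)
  simpa using this

lemma Sof_eq_zmultiples : Sof H = AddSubgroup.zmultiples (((Sof H).index : ℤ)) := by
  have hle : AddSubgroup.zmultiples (((Sof H).index : ℤ)) ≤ Sof H :=
    AddSubgroup.zmultiples_le.mpr (natCast_index_mem_Sof (H := H))
  have hidx : (AddSubgroup.zmultiples (((Sof H).index : ℤ))).index = (Sof H).index := by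
    rw [Int.index_zmultiples, Int.natAbs_natCast]
  have hrel := AddSubgroup.relIndex_mul_index hle
  rw [hidx] at hrel
  have hone : (AddSubgroup.zmultiples (((Sof H).index : ℤ))).relIndex (Sof H) = 1 := by
    have hd := index_Sof_ne_zero hH hn
    have h1 : (AddSubgroup.zmultiples (((Sof H).index : ℤ))).relIndex (Sof H) * (Sof H).index
        = 1 * (Sof H).index := by rw [hrel, one_mul]
    exact Nat.eq_of_mul_eq_mul_right (Nat.pos_of_ne_zero hd) h1
  exact le_antisymm (AddSubgroup.relIndex_eq_one.mp hone) hle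


omit hH hn in
lemma exists_v : ∃ g : G, (g, ((Sof H).index : ℤ)) ∈ H := by
  obtain ⟨⟨g, t⟩, hgt, ht⟩ := natCast_index_mem_Sof (H := H)
  have ht2 : t = ((Sof H).index : ℤ) := ht
  exact ⟨g, by rwa [← ht2]⟩

omit hH hn in
lemma vof_spec : (vof H, ((Sof H).index : ℤ)) ∈ H := by
  rw [vof, dif_pos (exists_v (H := H))]
  exact (exists_v (H := H)).choose_spec

lemma Hrec_eq : Hrec (Kof H) ((Sof H).index) (QuotientAddGroup.mk (vof H)) = H := by
  set d : ℕ := (Sof H).index with hd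
  ext ⟨w, t⟩
  constructor
  · rintro ⟨mm, ht, hw⟩
    have hw2 : -w + mm • vof H ∈ Kof H := by
      rw [← QuotientAddGroup.eq]
      rw [hw]
      exact (map_zsmul (QuotientAddGroup.mk' (Kof H)) mm (vof H)).symm
    have h1 : mm • (vof H, (d : ℤ)) ∈ H := AddSubgroup.zsmul_mem H (vof_spec (H := H)) mm
    have h2 : (-w + mm • vof H, (0:ℤ)) ∈ H := hw2
    have key : (w, t) = mm • (vof H, (d : ℤ)) - (-w + mm • vof H, 0) := by
      apply Prod.ext
      · simp
      · simpa [smul_eq_mul] using ht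
    rw [key]
    exact AddSubgroup.sub_mem H h1 h2
  · intro hwt
    have htS : t ∈ Sof H := ⟨(w, t), hwt, rfl⟩
    rw [Sof_eq_zmultiples hH hn] at htS
    obtain ⟨mm, hmm⟩ := AddSubgroup.mem_zmultiples_iff.mp htS
    refine ⟨mm, ?_, ?_⟩
    · rw [← hmm, smul_eq_mul]
    · have h1 : (w - mm • vof H, (0:ℤ)) ∈ H := by
        have h2 := AddSubgroup.sub_mem H hwt (AddSubgroup.zsmul_mem H (vof_spec (H := H)) mm)
        have key : (w, t) - mm • (vof H, (d : ℤ)) = (w - mm • vof H, (0:ℤ)) := by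
          apply Prod.ext
          · simp
          · simp [← hmm, smul_eq_mul, hd]
        rwa [key] at h2
      have hK : w - mm • vof H ∈ Kof H := h1
      rw [show mm • (QuotientAddGroup.mk (vof H) : G ⧸ Kof H)
            = QuotientAddGroup.mk (mm • vof H) from
          (map_zsmul (QuotientAddGroup.mk' (Kof H)) mm (vof H)).symm]
      rw [QuotientAddGroup.eq]
      have : -w + mm • vof H = -(w - mm • vof H) := by abel
      rw [this]
      exact AddSubgroup.neg_mem _ hK

end ZStep

open ZStep in
/-- The target of the packing injection. -/
def ZTarget (G : Type*) [AddCommGroup G] (n : ℕ) :=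
  Σ e : {e : ℕ // e ∈ n.divisors}, Σ K : {K : AddSubgroup G // K.index = e.1}, G ⧸ K.1

namespace ZStep

variable (G) in
noncomputable def pack (n : ℕ) (hn : n ≠ 0) (H : {H : AddSubgroup (G × ℤ) // H.index = n}) :
    ZTarget G n :=
  ⟨⟨(Kof H.1).index, Nat.mem_divisors.mpr
      ⟨⟨(Sof H.1).index, by rw [mul_comm]; exact prod_formula H.2 hn⟩, hn⟩⟩,
    ⟨Kof H.1, rfl⟩, QuotientAddGroup.mk (vof H.1)⟩

variable (G) in
def unpack (n : ℕ) (x : ZTarget G n) : AddSubgroup (G × ℤ) :=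
  Hrec x.2.1.1 (n / x.1.1) x.2.2

lemma unpack_pack {n : ℕ} (hn : n ≠ 0) (H : {H : AddSubgroup (G × ℤ) // H.index = n}) :
    unpack G n (pack G n hn H) = H.1 := by
  obtain ⟨H, hH⟩ := H
  show Hrec (Kof H) (n / (Kof H).index) (QuotientAddGroup.mk (vof H)) = H
  have he : (Kof H).index ≠ 0 := index_Kof_ne_zero hH hn
  have hdiv : n / (Kof H).index = (Sof H).index := by
    rw [prod_formula hH hn]
    exact Nat.mul_div_cancel _ (Nat.pos_of_ne_zero he)
  rw [hdiv]
  exact Hrec_eq hH hn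

lemma pack_injective {n : ℕ} (hn : n ≠ 0) : Function.Injective (pack G n hn) :=
  fun a b h => Subtype.ext (by rw [← unpack_pack hn a, ← unpack_pack hn b, h])

variable (G) in
lemma step_main (n : ℕ) (hn : n ≠ 0)
    (hfin : ∀ e : ℕ, e ≠ 0 → Finite {K : AddSubgroup G // K.index = e}) :
    Finite {H : AddSubgroup (G × ℤ) // H.index = n} ∧
    Nat.card {H : AddSubgroup (G × ℤ) // H.index = n} ≤ ∑ e ∈ n.divisors, e * idxCount G e := by
  classical
  have hKfin : ∀ e : {e : ℕ // e ∈ n.divisors}, Finite {K : AddSubgroup G // K.index = e.1} :=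
    fun e => hfin e.1 (Nat.pos_of_mem_divisors e.2).ne'
  have hQfin : ∀ (e : {e : ℕ // e ∈ n.divisors}) (K : {K : AddSubgroup G // K.index = e.1}),
      Finite (G ⧸ K.1) := fun e K =>
    Nat.finite_of_card_ne_zero
      (by rw [← AddSubgroup.index_eq_card, K.2]; exact (Nat.pos_of_mem_divisors e.2).ne')
  have hfinT : Finite (ZTarget G n) := by
    have : ∀ e : {e : ℕ // e ∈ n.divisors},
        Finite (Σ K : {K : AddSubgroup G // K.index = e.1}, G ⧸ K.1) := fun e => by
      have := hKfin e
      have := hQfin e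
      infer_instance
    exact Finite.instSigma
  refine ⟨Finite.of_injective _ (pack_injective hn), ?_⟩
  calc Nat.card {H : AddSubgroup (G × ℤ) // H.index = n}
      ≤ Nat.card (ZTarget G n) := Nat.card_le_card_of_injective _ (pack_injective hn)
    _ = ∑ e ∈ n.divisors, e * idxCount G e := by
        letI : ∀ e : {e : ℕ // e ∈ n.divisors}, Fintype {K : AddSubgroup G // K.index = e.1} :=
          fun e => @Fintype.ofFinite _ (hKfin e)
        letI : ∀ (e : {e : ℕ // e ∈ n.divisors}) (K : {K : AddSubgroup G // K.index = e.1}),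
            Fintype (G ⧸ K.1) := fun e K => @Fintype.ofFinite _ (hQfin e K)
        rw [show (ZTarget G n) = Σ e : {e : ℕ // e ∈ n.divisors},
          Σ K : {K : AddSubgroup G // K.index = e.1}, G ⧸ K.1 from rfl]
        rw [Nat.card_eq_fintype_card, Fintype.card_sigma]
        have inner : ∀ e : {e : ℕ // e ∈ n.divisors},
            Fintype.card (Σ K : {K : AddSubgroup G // K.index = e.1}, G ⧸ K.1)
              = e.1 * idxCount G e.1 := by
          intro e
          rw [Fintype.card_sigma]
          have hc : ∀ K : {K : AddSubgroup G // K.index = e.1},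
              Fintype.card (G ⧸ K.1) = e.1 := fun K => by
            rw [← Nat.card_eq_fintype_card, ← AddSubgroup.index_eq_card, K.2]
          rw [Finset.sum_congr rfl (fun K _ => hc K), Finset.sum_const, smul_eq_mul, mul_comm]
          congr 1
          rw [Finset.card_univ, idxCount, Nat.card_eq_fintype_card]
        rw [Finset.sum_congr rfl (fun e _ => inner e)]
        exact Finset.sum_coe_sort n.divisors (fun e => e * idxCount G e)

end ZStep
end Step

section PiInduction

/-- Splitting off the last coordinate. -/
def piSplit (r : ℕ) : (Fin (r+1) → ℤ) ≃+ (Fin r → ℤ) × ℤ where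
  toFun f := (fun i => f i.castSucc, f (Fin.last r))
  invFun p := Fin.snoc p.1 p.2
  left_inv f := by
    funext i
    refine Fin.lastCases ?_ ?_ i
    · simp
    · intro j; simp
  right_inv p := by
    refine Prod.ext ?_ ?_
    · funext i; simp
    · simp
  map_add' f g := rfl

lemma finite_idx (r : ℕ) : ∀ n : ℕ, n ≠ 0 →
    Finite {H : AddSubgroup (Fin r → ℤ) // H.index = n} := by
  induction r with
  | zero => intro n _; infer_instance
  | succ r ih =>
    intro n hn
    have h1 := (ZStep.step_main (Fin r → ℤ) n hn (fun e he => ih e he)).1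
    exact Finite.of_equiv _ (idxEquiv (piSplit r) n)

/-- `a_n(ℤ^r)`: the number of subgroups of index `n` in `ℤ^r`. -/
noncomputable def subCount (r n : ℕ) : ℕ :=
  Nat.card {H : AddSubgroup (Fin r → ℤ) // H.index = n}

/-- `F_λ(n) = Π_{i=1}^m Σ_{d∣n} d·a_d(ℤ^{λᵢ})`: the number of points of period `n` of `T_λ`. -/
noncomputable def Fcount {m : ℕ} (lam : Fin m → ℕ) (n : ℕ) : ℕ :=
  ∏ i, ∑ d ∈ n.divisors, d * subCount (lam i) d

/-- `O_λ(n) = (1/n) Σ_{d∣n} μ(n/d) F_λ(d)`: the number of closed orbits of length `n` of `T_λ`. -/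
noncomputable def Ocount {m : ℕ} (lam : Fin m → ℕ) (n : ℕ) : ℚ :=
  (∑ d ∈ n.divisors, (ArithmeticFunction.moebius (n / d) : ℚ) * (Fcount lam d : ℚ)) / n

section UpperBounds

lemma subCount_zero_eq (n : ℕ) : subCount 0 n = if n = 1 then 1 else 0 :=
  idxCount_subsingleton n

lemma subCount_one_right (r : ℕ) : subCount r 1 = 1 := by
  refine Nat.card_eq_one_iff_unique.mpr ⟨⟨?_⟩, ⟨⟨⊤, AddSubgroup.index_top⟩⟩⟩
  rintro ⟨H, hH⟩ ⟨H', hH'⟩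
  apply Subtype.ext
  show H = H'
  rw [AddSubgroup.index_eq_one.mp hH, AddSubgroup.index_eq_one.mp hH']

lemma subCount_rec (r n : ℕ) (hn : n ≠ 0) :
    subCount (r+1) n ≤ ∑ e ∈ n.divisors, e * subCount r e := by
  have h := (ZStep.step_main (Fin r → ℤ) n hn (fun e he => finite_idx r e he)).2
  have heq : subCount (r+1) n = Nat.card {H : AddSubgroup ((Fin r → ℤ) × ℤ) // H.index = n} :=
    (Nat.card_congr (idxEquiv (piSplit r) n)).symm
  rw [heq]
  exact h

lemma sum_divisors_pow_le (n lam : ℕ) (hn : n ≠ 0) (hl : 1 ≤ lam) :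
    ∑ e ∈ n.divisors, (e:ℝ)^lam ≤ (n:ℝ)^lam * (1 + Real.log n) := by
  have h1 : ∑ e ∈ n.divisors, ((n / e : ℕ):ℝ)^lam = ∑ e ∈ n.divisors, (e:ℝ)^lam :=
    Nat.sum_div_divisors n (fun e => (e:ℝ)^lam)
  rw [← h1]
  have h2 : ∀ e ∈ n.divisors, ((n / e : ℕ):ℝ)^lam ≤ (n:ℝ)^lam * (1/e) := by
    intro e he
    obtain ⟨hed, _⟩ := Nat.mem_divisors.mp he
    have he0 : 0 < e := Nat.pos_of_mem_divisors he
    have he1 : (1:ℝ) ≤ (e:ℝ) := by exact_mod_cast he0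
    rw [Nat.cast_div hed (by exact_mod_cast he0.ne'), div_pow, mul_one_div]
    refine div_le_div_of_nonneg_left (by positivity) (by exact_mod_cast he0) ?_
    exact le_self_pow₀ he1 (by omega)
  calc ∑ e ∈ n.divisors, ((n / e : ℕ):ℝ)^lam
      ≤ ∑ e ∈ n.divisors, (n:ℝ)^lam * (1/e) := Finset.sum_le_sum h2
    _ = (n:ℝ)^lam * ∑ e ∈ n.divisors, (1/(e:ℝ)) := by rw [Finset.mul_sum]
    _ ≤ (n:ℝ)^lam * (1 + Real.log n) := by
        refine mul_le_mul_of_nonneg_left ?_ (by positivity)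
        calc ∑ e ∈ n.divisors, (1/(e:ℝ))
            ≤ ∑ e ∈ Finset.Icc 1 n, (1/(e:ℝ)) := by
              refine Finset.sum_le_sum_of_subset_of_nonneg ?_ (by intros; positivity)
              intro e he
              exact Finset.mem_Icc.mpr ⟨Nat.pos_of_mem_divisors he,
                Nat.le_of_dvd (Nat.pos_of_ne_zero hn) (Nat.mem_divisors.mp he).1⟩
          _ = ((harmonic n : ℚ) : ℝ) := by
              rw [harmonic_eq_sum_Icc]
              push_cast
              simp [one_div]
          _ ≤ 1 + Real.log n := harmonic_le_one_add_log n

lemma one_le_one_add_log {n : ℕ} (hn : n ≠ 0) : (1:ℝ) ≤ 1 + Real.log n := by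
  have : (0:ℝ) ≤ Real.log n := Real.log_nonneg (by exact_mod_cast Nat.one_le_iff_ne_zero.mpr hn)
  linarith

lemma subCount_one_le (n : ℕ) (hn : n ≠ 0) : subCount 1 n ≤ 1 := by
  have h := subCount_rec 0 n hn
  have hs : ∑ e ∈ n.divisors, e * subCount 0 e = 1 := by
    rw [Finset.sum_eq_single 1]
    · simp [subCount_zero_eq]
    · intro e _ hne; simp [subCount_zero_eq, hne]
    · intro h1; exact absurd (Nat.one_mem_divisors.mpr hn) h1
  rwa [hs] at h

/-- The key estimate for one factor. -/
lemma key_sum_le (k n : ℕ) (hn : n ≠ 0)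
    (ih : ∀ e : ℕ, e ≠ 0 → (subCount (k+1) e : ℝ) ≤ (e:ℝ)^k * (1 + Real.log e)^k) :
    ∑ d ∈ n.divisors, (d:ℝ) * subCount (k+1) d ≤ (n:ℝ)^(k+1) * (1 + Real.log n)^(k+1) := by
  have hlog : (0:ℝ) ≤ 1 + Real.log n := le_trans zero_le_one (one_le_one_add_log hn)
  calc ∑ d ∈ n.divisors, (d:ℝ) * subCount (k+1) d
      ≤ ∑ d ∈ n.divisors, (d:ℝ)^(k+1) * (1 + Real.log n)^k := by
        refine Finset.sum_le_sum ?_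
        intro d hd
        have hd0 : 0 < d := Nat.pos_of_mem_divisors hd
        have hd1 : (1:ℝ) ≤ (d:ℝ) := by exact_mod_cast hd0
        have hdn : (d:ℝ) ≤ (n:ℝ) := by
          exact_mod_cast Nat.le_of_dvd (Nat.pos_of_ne_zero hn) (Nat.mem_divisors.mp hd).1
        have hloge : (0:ℝ) ≤ 1 + Real.log d := le_trans zero_le_one (one_le_one_add_log hd0.ne')
        calc (d:ℝ) * subCount (k+1) d
            ≤ (d:ℝ) * ((d:ℝ)^k * (1 + Real.log d)^k) := by
              refine mul_le_mul_of_nonneg_left (ih d hd0.ne') (by positivity)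
          _ ≤ (d:ℝ) * ((d:ℝ)^k * (1 + Real.log n)^k) := by
              refine mul_le_mul_of_nonneg_left (mul_le_mul_of_nonneg_left ?_ (by positivity))
                (by positivity)
              refine pow_le_pow_left₀ hloge ?_ k
              have : Real.log d ≤ Real.log n := Real.log_le_log (by exact_mod_cast hd0) hdn
              linarith
          _ = (d:ℝ)^(k+1) * (1 + Real.log n)^k := by ring
    _ = (∑ d ∈ n.divisors, (d:ℝ)^(k+1)) * (1 + Real.log n)^k := by rw [Finset.sum_mul]
    _ ≤ ((n:ℝ)^(k+1) * (1 + Real.log n)) * (1 + Real.log n)^k := by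
        refine mul_le_mul_of_nonneg_right ?_ (by positivity)
        exact sum_divisors_pow_le n (k+1) hn (by omega)
    _ = (n:ℝ)^(k+1) * (1 + Real.log n)^(k+1) := by ring

lemma subCount_le_real : ∀ k n : ℕ, n ≠ 0 →
    (subCount (k+1) n : ℝ) ≤ (n:ℝ)^k * (1 + Real.log n)^k := by
  intro k
  induction k with
  | zero =>
    intro n hn
    simpa using (by exact_mod_cast subCount_one_le n hn : (subCount 1 n : ℝ) ≤ 1)
  | succ k ih =>
    intro n hn
    have h := subCount_rec (k+1) n hn
    have h' : (subCount (k+2) n : ℝ) ≤ ∑ d ∈ n.divisors, (d:ℝ) * subCount (k+1) d := by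
      exact_mod_cast h
    exact h'.trans (key_sum_le k n hn ih)

lemma factor_le (l n : ℕ) (hl : 1 ≤ l) (hn : n ≠ 0) :
    ∑ d ∈ n.divisors, (d:ℝ) * subCount l d ≤ (n:ℝ)^l * (1 + Real.log n)^l := by
  obtain ⟨k, rfl⟩ := Nat.exists_eq_add_of_le hl
  simpa [add_comm] using key_sum_le k n hn (fun e he => subCount_le_real k e he)

lemma Fcount_le {m : ℕ} (lam : Fin m → ℕ) (hpos : ∀ i, 1 ≤ lam i) (N : ℕ)
    (hN : N = ∑ i, lam i) (n : ℕ) (hn : n ≠ 0) :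
    (Fcount lam n : ℝ) ≤ (n:ℝ)^N * (1 + Real.log n)^N := by
  rw [Fcount]
  push_cast
  calc ∏ i, (∑ d ∈ n.divisors, (d:ℝ) * subCount (lam i) d)
      ≤ ∏ i, ((n:ℝ)^(lam i) * (1 + Real.log n)^(lam i)) := by
        refine Finset.prod_le_prod ?_ ?_
        · intro i _
          refine Finset.sum_nonneg fun d _ => by positivity
        · intro i _
          exact factor_le (lam i) n (hpos i) hn
    _ = (n:ℝ)^N * (1 + Real.log n)^N := by
        rw [Finset.prod_mul_distrib, Finset.prod_pow_eq_pow_sum, Finset.prod_pow_eq_pow_sum, hN]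

end UpperBounds

section Primes

/-- An integer linear form as an `AddMonoidHom`. -/
def intForm {k : ℕ} (c : Fin k → ℤ) : (Fin k → ℤ) →+ ℤ where
  toFun x := ∑ i, c i * x i
  map_zero' := by simp
  map_add' x y := by
    simp only [Pi.add_apply, mul_add]
    rw [Finset.sum_add_distrib]

/-- The reduction-mod-`p` linear form attached to `b : Fin k → ZMod p`. -/
def primeHom (p : ℕ) {k : ℕ} (b : Fin k → ZMod p) : (Fin (k+1) → ℤ) →+ ZMod p :=
  (Int.castAddHom (ZMod p)).comp (intForm (Fin.snoc (fun i => ((b i).val : ℤ)) 1))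

lemma primeHom_apply (p : ℕ) {k : ℕ} (b : Fin k → ZMod p) (x : Fin (k+1) → ℤ) :
    primeHom p b x =
      ((∑ i : Fin (k+1), (Fin.snoc (fun i => ((b i).val : ℤ)) 1 : Fin (k+1) → ℤ) i * x i : ℤ)
        : ZMod p) := rfl

lemma primeHom_single (p : ℕ) {k : ℕ} (b : Fin k → ZMod p) :
    primeHom p b (Pi.single (Fin.last k) 1) = 1 := by
  rw [primeHom_apply, Fin.sum_univ_castSucc]
  have h1 : ∀ j : Fin k, (Pi.single (Fin.last k) 1 : Fin (k+1) → ℤ) j.castSucc = 0 := fun j => by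
    simp [Pi.single_apply, (Fin.castSucc_lt_last j).ne]
  simp [h1]

lemma primeHom_surjective (p : ℕ) [NeZero p] {k : ℕ} (b : Fin k → ZMod p) :
    Function.Surjective (primeHom p b) := by
  intro z
  refine ⟨z.val • Pi.single (Fin.last k) 1, ?_⟩
  rw [map_nsmul, primeHom_single]
  rw [nsmul_eq_mul, mul_one]
  exact ZMod.natCast_rightInverse z

lemma primeHom_ker_index (p : ℕ) [NeZero p] {k : ℕ} (b : Fin k → ZMod p) :
    (primeHom p b).ker.index = p := by
  rw [AddSubgroup.index_ker, AddMonoidHom.range_eq_top.mpr (primeHom_surjective p b)]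
  rw [Nat.card_congr AddSubgroup.topEquiv.toEquiv, Nat.card_zmod]

lemma primeHom_ker_injective (p : ℕ) [NeZero p] {k : ℕ} :
    Function.Injective (fun b : Fin k → ZMod p => (primeHom p b).ker) := by
  intro b b' hkk
  funext i
  by_contra hne
  set x : Fin (k+1) → ℤ := Fin.snoc (Pi.single i 1) (-((b i).val : ℤ)) with hx
  have hval : ∀ c : Fin k → ZMod p,
      (∑ j : Fin (k+1), (Fin.snoc (fun i => ((c i).val : ℤ)) 1 : Fin (k+1) → ℤ) j * x j : ℤ)
        = ((c i).val : ℤ) - ((b i).val : ℤ) := by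
    intro c
    rw [Fin.sum_univ_castSucc]
    have h2 : ∀ j : Fin k, x j.castSucc = (Pi.single i 1 : Fin k → ℤ) j := fun j => by
      rw [hx, Fin.snoc_castSucc]
    have h3 : x (Fin.last k) = -((b i).val : ℤ) := by rw [hx, Fin.snoc_last]
    simp only [Fin.snoc_castSucc, h2, h3, Fin.snoc_last, one_mul]
    rw [Finset.sum_congr rfl (fun j _ => by rw [Pi.single_apply, mul_ite, mul_one, mul_zero])]
    rw [Finset.sum_ite_eq' Finset.univ i (fun j => ((c j).val : ℤ))]
    simp [sub_eq_add_neg]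
  have hxb : x ∈ (primeHom p b).ker := by
    rw [AddMonoidHom.mem_ker, primeHom_apply, hval b]
    push_cast
    simp
  have hkk' : (primeHom p b).ker = (primeHom p b').ker := hkk
  rw [hkk', AddMonoidHom.mem_ker, primeHom_apply, hval b'] at hxb
  push_cast at hxb
  rw [ZMod.natCast_val, ZMod.natCast_val] at hxb
  simp only [ZMod.intCast_cast, ZMod.cast_id', id_eq, sub_eq_zero] at hxb
  exact hne hxb.symm

lemma subCount_prime_ge (k p : ℕ) (hp : p.Prime) : p^k ≤ subCount (k+1) p := by
  haveI : NeZero p := ⟨hp.ne_zero⟩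
  haveI : Finite {H : AddSubgroup (Fin (k+1) → ℤ) // H.index = p} := finite_idx _ p hp.ne_zero
  have hinj : Function.Injective
      (fun b : Fin k → ZMod p =>
        (⟨(primeHom p b).ker, primeHom_ker_index p b⟩ :
          {H : AddSubgroup (Fin (k+1) → ℤ) // H.index = p})) := by
    intro a b h
    exact primeHom_ker_injective p (congrArg Subtype.val h)
  calc p^k = Nat.card (Fin k → ZMod p) := by
        rw [Nat.card_eq_fintype_card, Fintype.card_fun]
        simp [ZMod.card]
    _ ≤ subCount (k+1) p := Nat.card_le_card_of_injective _ hinj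

lemma Fcount_one {m : ℕ} (lam : Fin m → ℕ) : Fcount lam 1 = 1 := by
  rw [Fcount]
  simp [Nat.divisors_one, subCount_one_right]

lemma Fcount_prime_ge {m : ℕ} (lam : Fin m → ℕ) (hpos : ∀ i, 1 ≤ lam i) (N : ℕ)
    (hN : N = ∑ i, lam i) (p : ℕ) (hp : p.Prime) : p^N ≤ Fcount lam p := by
  rw [Fcount, hN, ← Finset.prod_pow_eq_pow_sum]
  refine Finset.prod_le_prod' ?_
  intro i _
  obtain ⟨k, hk⟩ := Nat.exists_eq_add_of_le (hpos i)
  rw [hk]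
  calc p^(1+k) = p * p^k := by ring
    _ ≤ p * subCount (k+1) p := Nat.mul_le_mul_left p (subCount_prime_ge k p hp)
    _ ≤ ∑ d ∈ p.divisors, d * subCount (1+k) d := by
        rw [hp.divisors, Finset.sum_pair hp.one_lt.ne, add_comm 1 k]
        exact Nat.le_add_left _ _

section OcountBounds

lemma moebius_abs_le (x : ℕ) : |((ArithmeticFunction.moebius x : ℤ) : ℝ)| ≤ 1 := by
  by_cases h : Squarefree x
  · rw [ArithmeticFunction.moebius_apply_of_squarefree h]
    push_cast
    rw [abs_pow, abs_neg, abs_one, one_pow]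
  · rw [ArithmeticFunction.moebius_eq_zero_of_not_squarefree h]
    simp

lemma Ocount_zero {m : ℕ} (lam : Fin m → ℕ) : Ocount lam 0 = 0 := by
  simp [Ocount]

lemma Ocount_abs_le {m : ℕ} (lam : Fin m → ℕ) (hpos : ∀ i, 1 ≤ lam i) (N : ℕ)
    (hN : N = ∑ i, lam i) (hN1 : 1 ≤ N) (n : ℕ) (hn : n ≠ 0) :
    |((Ocount lam n : ℚ) : ℝ)| ≤ (n:ℝ)^N * (1 + Real.log n)^(N+1) / n := by
  have hn0 : (0:ℝ) < n := by exact_mod_cast Nat.pos_of_ne_zero hn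
  have hlog : (0:ℝ) ≤ 1 + Real.log n := le_trans zero_le_one (one_le_one_add_log hn)
  rw [Ocount]
  push_cast
  rw [abs_div, abs_of_nonneg hn0.le]
  rw [div_le_div_iff_of_pos_right hn0]
  calc |∑ d ∈ n.divisors, ((ArithmeticFunction.moebius (n/d) : ℤ) : ℝ) * (Fcount lam d : ℝ)|
      ≤ ∑ d ∈ n.divisors,
          |((ArithmeticFunction.moebius (n/d) : ℤ) : ℝ) * (Fcount lam d : ℝ)| :=
        Finset.abs_sum_le_sum_abs _ _
    _ ≤ ∑ d ∈ n.divisors, (Fcount lam d : ℝ) := by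
        refine Finset.sum_le_sum fun d _ => ?_
        rw [abs_mul, abs_of_nonneg (by positivity : (0:ℝ) ≤ (Fcount lam d : ℝ))]
        exact mul_le_of_le_one_left (by positivity) (moebius_abs_le _)
    _ ≤ ∑ d ∈ n.divisors, (d:ℝ)^N * (1 + Real.log n)^N := by
        refine Finset.sum_le_sum fun d hd => ?_
        have hd0 : 0 < d := Nat.pos_of_mem_divisors hd
        have hdn : (d:ℝ) ≤ (n:ℝ) := by
          exact_mod_cast Nat.le_of_dvd (Nat.pos_of_ne_zero hn) (Nat.mem_divisors.mp hd).1
        have hloge : (0:ℝ) ≤ 1 + Real.log d := le_trans zero_le_one (one_le_one_add_log hd0.ne')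
        refine (Fcount_le lam hpos N hN d hd0.ne').trans ?_
        refine mul_le_mul_of_nonneg_left ?_ (by positivity)
        refine pow_le_pow_left₀ hloge ?_ N
        have : Real.log d ≤ Real.log n := Real.log_le_log (by exact_mod_cast hd0) hdn
        linarith
    _ = (∑ d ∈ n.divisors, (d:ℝ)^N) * (1 + Real.log n)^N := by rw [Finset.sum_mul]
    _ ≤ ((n:ℝ)^N * (1 + Real.log n)) * (1 + Real.log n)^N := by
        refine mul_le_mul_of_nonneg_right ?_ (by positivity)
        exact sum_divisors_pow_le n N hn hN1
    _ = (n:ℝ)^N * (1 + Real.log n)^(N+1) := by ring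

lemma Ocount_prime {m : ℕ} (lam : Fin m → ℕ) (p : ℕ) (hp : p.Prime) :
    Ocount lam p = ((Fcount lam p : ℚ) - 1) / p := by
  rw [Ocount, hp.divisors, Finset.sum_pair hp.one_lt.ne]
  rw [Nat.div_one, Nat.div_self hp.pos, ArithmeticFunction.moebius_apply_one,
    ArithmeticFunction.moebius_apply_prime hp, Fcount_one]
  push_cast
  ring_nf

lemma one_add_log_le {δ : ℝ} (hδ : 0 < δ) (n : ℕ) (hn : n ≠ 0) :
    1 + Real.log n ≤ (1 + 1/δ) * (n:ℝ)^(δ:ℝ) := by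
  have h1 : (1:ℝ) ≤ (n:ℝ) := by exact_mod_cast Nat.one_le_iff_ne_zero.mpr hn
  have h2 : Real.log n ≤ (n:ℝ)^(δ:ℝ) / δ := Real.log_le_rpow_div (by positivity) hδ
  have h3 : (1:ℝ) ≤ (n:ℝ)^(δ:ℝ) := Real.one_le_rpow h1 hδ.le
  calc 1 + Real.log n ≤ (n:ℝ)^(δ:ℝ) + (n:ℝ)^(δ:ℝ)/δ := by linarith
    _ = (1 + 1/δ) * (n:ℝ)^(δ:ℝ) := by field_simp

end OcountBounds

/-- **Theorem 4.1(1), abscissa of convergence**: the orbit Dirichlet series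
`Σ_{n≥1} O_λ(n) n^{−s}` converges for `Re(s) > N` and diverges for `Re(s) < N`. -/
theorem orbit_dirichlet_abscissa (m N : ℕ) (hm : 0 < m) (lam : Fin m → ℕ)
    (hanti : Antitone lam) (hpos : ∀ i, 1 ≤ lam i) (hN : N = ∑ i, lam i) :
    (∀ s : ℂ, (N : ℝ) < s.re →
      Summable fun n : ℕ => (Ocount lam n : ℂ) * (n : ℂ) ^ (-s)) ∧
    (∀ s : ℂ, s.re < (N : ℝ) →
      ¬ Summable fun n : ℕ => (Ocount lam n : ℂ) * (n : ℂ) ^ (-s)) := by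
  have hN1 : 1 ≤ N := by
    rw [hN]
    calc 1 ≤ m := hm
      _ = ∑ _i : Fin m, 1 := by simp
      _ ≤ ∑ i, lam i := Finset.sum_le_sum (fun i _ => hpos i)
  constructor
  · -- convergence for Re s > N
    intro s hs
    set σ := s.re with hσ
    set δ : ℝ := (σ - N)/(2*(N+1)) with hδdef
    have hδ : 0 < δ := div_pos (by linarith) (by positivity)
    set C : ℝ := (1 + 1/δ)^(N+1) with hC
    have hC0 : (0:ℝ) ≤ C := by positivity
    set E : ℝ := (N:ℝ) + δ*(N+1) - 1 - σ with hE
    have hEδ : δ * (N+1) = (σ - (N:ℝ))/2 := by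
      rw [hδdef]
      field_simp
    have hElt : E < -1 := by
      rw [hE, hEδ]
      linarith
    refine Summable.of_norm_bounded (g := fun n : ℕ => C * (n:ℝ) ^ E) ?_ ?_
    · exact (Real.summable_nat_rpow.mpr hElt).mul_left C
    · intro n
      by_cases hn : n = 0
      · subst hn
        simp only [Ocount_zero, Rat.cast_zero, zero_mul, norm_zero, Nat.cast_zero]
        positivity
      · have hn0 : (0:ℝ) < n := by exact_mod_cast Nat.pos_of_ne_zero hn
        have hn1 : (1:ℝ) ≤ n := by exact_mod_cast Nat.one_le_iff_ne_zero.mpr hn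
        rw [norm_mul, Complex.norm_ratCast, Complex.norm_natCast_cpow_of_pos
          (Nat.pos_of_ne_zero hn), Complex.neg_re, ← hσ]
        have hlog : (0:ℝ) ≤ 1 + Real.log n := le_trans zero_le_one (one_le_one_add_log hn)
        have hpow : ∀ a b : ℝ, (n:ℝ) ^ a * (n:ℝ) ^ b = (n:ℝ) ^ (a+b) :=
          fun a b => (Real.rpow_add hn0 a b).symm
        have hkey : (1 + Real.log n)^(N+1) ≤ C * (n:ℝ)^(δ*(N+1)) := by
          calc (1 + Real.log n)^(N+1) ≤ ((1+1/δ) * (n:ℝ)^(δ:ℝ))^(N+1) :=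
                pow_le_pow_left₀ hlog (one_add_log_le hδ n hn) (N+1)
            _ = C * (n:ℝ)^(δ*(N+1)) := by
                rw [mul_pow, ← Real.rpow_natCast ((n:ℝ)^(δ:ℝ)) (N+1),
                  ← Real.rpow_mul hn0.le]
                push_cast
                rw [hC]
        calc |((Ocount lam n : ℚ) : ℝ)| * (n:ℝ) ^ (-σ)
            ≤ ((n:ℝ)^N * (1 + Real.log n)^(N+1) / n) * (n:ℝ) ^ (-σ) :=
              mul_le_mul_of_nonneg_right
                (Ocount_abs_le lam hpos N hN hN1 n hn) (Real.rpow_nonneg hn0.le _)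
          _ ≤ ((n:ℝ)^N * (C * (n:ℝ)^(δ*(N+1))) / n) * (n:ℝ) ^ (-σ) := by
              gcongr
          _ = C * (n:ℝ) ^ E := by
              have hinv : (n:ℝ)⁻¹ = (n:ℝ)^(-1:ℝ) := by
                rw [Real.rpow_neg hn0.le, Real.rpow_one]
              rw [div_eq_mul_inv, hinv, ← Real.rpow_natCast (n:ℝ) N]
              rw [show (n:ℝ)^((N:ℕ):ℝ) * (C * (n:ℝ)^(δ*(N+1))) * (n:ℝ)^(-1:ℝ) * (n:ℝ)^(-σ)
                  = C * ((n:ℝ)^((N:ℕ):ℝ) * (n:ℝ)^(δ*(N+1)) * (n:ℝ)^(-1:ℝ) * (n:ℝ)^(-σ))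
                from by ring]
              rw [hpow, hpow, hpow]
              rw [hE]
              congr 2
  · -- divergence for Re s < N
    intro s hs hsum
    set σ := s.re with hσ
    have hsum2 : Summable (fun p : Nat.Primes => ‖(Ocount lam (p:ℕ) : ℂ) * ((p:ℕ):ℂ) ^ (-s)‖) :=
      (summable_norm_iff.mpr hsum).comp_injective Nat.Primes.coe_nat_injective
    have hub : ∀ p : Nat.Primes,
        ((p:ℕ):ℝ) ^ (-1:ℝ) ≤ 2 * ‖(Ocount lam (p:ℕ) : ℂ) * ((p:ℕ):ℂ) ^ (-s)‖ := by
      rintro ⟨p, hp⟩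
      have hp0 : (0:ℝ) < p := by exact_mod_cast hp.pos
      have hp1 : (1:ℝ) ≤ p := by exact_mod_cast hp.one_lt.le
      have hp2 : (2:ℝ) ≤ p := by exact_mod_cast hp.two_le
      have hppow : ∀ a b : ℝ, (p:ℝ) ^ a * (p:ℝ) ^ b = (p:ℝ) ^ (a+b) :=
        fun a b => (Real.rpow_add hp0 a b).symm
      show ((p:ℕ):ℝ) ^ (-1:ℝ) ≤ 2 * ‖(Ocount lam p : ℂ) * ((p:ℕ):ℂ) ^ (-s)‖
      rw [norm_mul, Complex.norm_ratCast, Complex.norm_natCast_cpow_of_pos hp.pos, Complex.neg_re, ← hσ]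
      have hFp : ((p:ℝ))^N ≤ (Fcount lam p : ℝ) := by
        exact_mod_cast Fcount_prime_ge lam hpos N hN p hp
      have hpN2 : (2:ℝ) ≤ (p:ℝ)^N := by
        calc (2:ℝ) ≤ (p:ℝ) := hp2
          _ ≤ (p:ℝ)^N := le_self_pow₀ hp1 (by omega)
      have hO : ((p:ℝ))^N / (2*p) ≤ |((Ocount lam p : ℚ) : ℝ)| := by
        have hval : ((Ocount lam p : ℚ) : ℝ) = ((Fcount lam p : ℝ) - 1) / p := by
          rw [Ocount_prime lam p hp]
          push_cast
          ring
        have hge : ((p:ℝ))^N / (2*p) ≤ ((Fcount lam p : ℝ) - 1) / p := by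
          have h0 : ((p:ℝ))^N / (2*p) = ((p:ℝ)^N/2)/p := by ring
          rw [h0]
          gcongr
          linarith
        calc ((p:ℝ))^N / (2*p) ≤ ((Fcount lam p : ℝ) - 1) / p := hge
          _ = ((Ocount lam p : ℚ) : ℝ) := hval.symm
          _ ≤ |((Ocount lam p : ℚ) : ℝ)| := le_abs_self _
      have hinv : (p:ℝ)⁻¹ = (p:ℝ)^(-1:ℝ) := by
        rw [Real.rpow_neg hp0.le, Real.rpow_one]
      calc ((p:ℕ):ℝ) ^ (-1:ℝ)
          ≤ ((p:ℕ):ℝ) ^ ((N:ℝ) - 1 - σ) :=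
            Real.rpow_le_rpow_of_exponent_le hp1 (by push_cast; linarith)
        _ = 2 * (((p:ℝ))^N / (2*p) * (p:ℝ)^(-σ)) := by
            rw [show ((p:ℝ))^N / (2*p) * (p:ℝ)^(-σ)
                = (1/2) * ((p:ℝ)^N * (p:ℝ)⁻¹ * (p:ℝ)^(-σ)) from by ring]
            rw [hinv, ← Real.rpow_natCast (p:ℝ) N, hppow, hppow]
            push_cast
            ring_nf
        _ ≤ 2 * (|((Ocount lam p : ℚ) : ℝ)| * (p:ℝ)^(-σ)) := by
            have hrn : (0:ℝ) ≤ (p:ℝ)^(-σ) := Real.rpow_nonneg hp0.le _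
            gcongr
    have hsummp : Summable (fun p : Nat.Primes => ((p:ℕ):ℝ) ^ (-1:ℝ)) :=
      Summable.of_nonneg_of_le (fun p => Real.rpow_nonneg (by positivity) _) hub
        (hsum2.mul_left 2)
    have hcontra := Nat.Primes.summable_rpow.mp hsummp
    linarith
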